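/- Let Γ be a d-regular graph with d ≥ 3 and girth g, let j ≥ 1 be an integer, and consider the j-subdivision Γ^{(j)} with girth j·g. Let m be a vertex of Γ^{(j)} and 0 < λ ≤ 1/4. Then the ball of radius λ·j·g around m in Γ^{(j)} has at most C·j·(d−1)^{g/4} vertices, where C is a constant depending only on d. -/

import Mathlib

/-- Outer vertex boundary of a set `A` in a graph `Γ`. -/
def vbdry {V : Type} (Γ : SimpleGraph V) (A : Set V) : Set V :=
  {v | v ∉ A ∧ ∃ a ∈ A, Γ.Adj v a}

/-- `Γ` has Cheeger constant at least `h`: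
`|∂A| ≥ h · min(|A|, |Aᶜ|)` for every vertex set `A`. -/
def CheegerGE {V : Type} (Γ : SimpleGraph V) (h : ℝ) : Prop :=
  ∀ A : Set V, h * min A.ncard Aᶜ.ncard ≤ ((vbdry Γ A).ncard : ℝ)

/-- Interior vertices of the `j`-subdivision: an oriented edge `x < y` of `Γ` together
with a position `i ∈ Fin (j-1)`. -/
def SubIdx {V : Type} [LinearOrder V] (Γ : SimpleGraph V) (j : ℕ) : Type :=
  {p : V × V × Fin (j - 1) // p.1 < p.2.1 ∧ Γ.Adj p.1 p.2.1}

/-- The `j`-subdivision of `Γ`: each edge is replaced by a path of length `j`. -/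
def subdiv {V : Type} [LinearOrder V] (Γ : SimpleGraph V) (j : ℕ) :
    SimpleGraph (V ⊕ SubIdx Γ j) :=
  SimpleGraph.fromRel (fun u v =>
    match u, v with
    | .inl a, .inl b => j = 1 ∧ Γ.Adj a b
    | .inl a, .inr ⟨(x, y, i), _⟩ => (a = x ∧ (i : ℕ) = 0) ∨ (a = y ∧ (i : ℕ) + 2 = j)
    | .inr ⟨(x, y, i), _⟩, .inr ⟨(x', y', i'), _⟩ =>
        x = x' ∧ y = y' ∧ (i : ℕ) + 1 = (i' : ℕ)
    | _, _ => False)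

instance {V : Type} [LinearOrder V] [Fintype V] [DecidableEq V] (Γ : SimpleGraph V)
    [DecidableRel Γ.Adj] (j : ℕ) : Fintype (SubIdx Γ j) := by
  unfold SubIdx; infer_instance


open SimpleGraph

variable {W : Type} (G : SimpleGraph W)

/-- Ball of radius `n` around `m`. -/
def ballSet (m : W) (n : ℕ) : Set W := {v | ∃ w : G.Walk m v, w.length ≤ n}

lemma ballSet_mono {m : W} {n n' : ℕ} (h : n ≤ n') : ballSet G m n ⊆ ballSet G m n' :=
  fun _ ⟨w, hw⟩ => ⟨w, hw.trans h⟩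

lemma mem_ballSet_zero {m v : W} (h : v ∈ ballSet G m 0) : v = m := by
  obtain ⟨w, hw⟩ := h
  exact (SimpleGraph.Walk.eq_of_length_eq_zero (Nat.le_zero.mp hw)).symm

lemma ballSet_self (m : W) (n : ℕ) : m ∈ ballSet G m n :=
  ⟨SimpleGraph.Walk.nil, by simp⟩

/-- a vertex in `B(n+1) \ B n` has a neighbor in `B n`. -/
lemma exists_pred {m v : W} {n : ℕ} (h : v ∈ ballSet G m (n+1)) (h2 : v ∉ ballSet G m n) :
    ∃ u, G.Adj v u ∧ u ∈ ballSet G m n := by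
  obtain ⟨w, hw⟩ := h
  have hlen : w.length = n + 1 := by
    rcases Nat.lt_or_ge w.length (n+1) with h' | h'
    · exact absurd ⟨w, Nat.lt_succ_iff.mp h'⟩ h2
    · omega
  have hnn : ¬ w.reverse.Nil := by
    rw [SimpleGraph.Walk.not_nil_iff_lt_length, SimpleGraph.Walk.length_reverse]; omega
  obtain ⟨u, ha, q, hq⟩ := SimpleGraph.Walk.not_nil_iff.mp hnn
  refine ⟨u, ha, q.reverse, ?_⟩
  have : w.reverse.length = n + 1 := by rw [SimpleGraph.Walk.length_reverse]; exact hlen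
  rw [hq] at this
  simp only [SimpleGraph.Walk.length_cons] at this
  rw [SimpleGraph.Walk.length_reverse]; omega

/-- a vertex in `B(n+2) \ B(n+1)` has a neighbor in `B(n+1) \ B n`. -/
lemma exists_pred_sphere {m v : W} {n : ℕ} (h : v ∈ ballSet G m (n+2))
    (h2 : v ∉ ballSet G m (n+1)) :
    ∃ u, G.Adj u v ∧ u ∈ ballSet G m (n+1) ∧ u ∉ ballSet G m n := by
  obtain ⟨u, ha, hu⟩ := exists_pred G h h2
  refine ⟨u, ha.symm, hu, fun hun => h2 ?_⟩
  obtain ⟨p, hp⟩ := hun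
  exact ⟨p.concat ha.symm, by rw [SimpleGraph.Walk.length_concat]; omega⟩

lemma sphere_zero_ncard [Fintype W] {m : W} {d : ℕ}
    (hdeg : ∀ v, (G.neighborSet v).ncard ≤ d) :
    (ballSet G m 1 \ ballSet G m 0).ncard ≤ d := by
  refine le_trans (Set.ncard_le_ncard ?_ (Set.toFinite _)) (hdeg m)
  rintro v ⟨h1, h2⟩
  obtain ⟨u, ha, hu⟩ := exists_pred G h1 h2
  have := mem_ballSet_zero G hu
  subst this
  exact ha.symm

lemma sphere_succ_ncard [Fintype W] {m : W} {d : ℕ} (n : ℕ)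
    (hdeg : ∀ v, (G.neighborSet v).ncard ≤ d) :
    (ballSet G m (n+2) \ ballSet G m (n+1)).ncard ≤
      (d - 1) * (ballSet G m (n+1) \ ballSet G m n).ncard := by
  classical
  set S1 : Set W := ballSet G m (n+1) \ ballSet G m n with hS1
  set S2 : Set W := ballSet G m (n+2) \ ballSet G m (n+1) with hS2
  have hsub : S2.toFinset ⊆ S1.toFinset.biUnion
      (fun u => (G.neighborSet u ∩ S2).toFinset) := by
    intro v hv
    rw [Set.mem_toFinset] at hv
    obtain ⟨u, ha, hu1, hu2⟩ := exists_pred_sphere G hv.1 hv.2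
    rw [Finset.mem_biUnion]
    exact ⟨u, by rw [Set.mem_toFinset]; exact ⟨hu1, hu2⟩,
      by rw [Set.mem_toFinset]; exact ⟨ha, hv⟩⟩
  have hpiece : ∀ u ∈ S1.toFinset, ((G.neighborSet u ∩ S2).toFinset).card ≤ d - 1 := by
    intro u hu
    rw [Set.mem_toFinset] at hu
    obtain ⟨p, hap, hp⟩ := exists_pred G hu.1 hu.2
    have hsub2 : G.neighborSet u ∩ S2 ⊆ G.neighborSet u \ {p} := by
      rintro x ⟨hx1, hx2⟩
      refine ⟨hx1, fun hxp => ?_⟩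
      simp only [Set.mem_singleton_iff] at hxp
      subst hxp
      exact hx2.2 (ballSet_mono G (Nat.le_succ n) hp)
    calc ((G.neighborSet u ∩ S2).toFinset).card
        = (G.neighborSet u ∩ S2).ncard := (Set.ncard_eq_toFinset_card' _).symm
      _ ≤ (G.neighborSet u \ {p}).ncard := Set.ncard_le_ncard hsub2 (Set.toFinite _)
      _ = (G.neighborSet u).ncard - 1 := Set.ncard_diff_singleton_of_mem hap
      _ ≤ d - 1 := by have := hdeg u; omega
  calc S2.ncard = S2.toFinset.card := Set.ncard_eq_toFinset_card' _
    _ ≤ _ := Finset.card_le_card hsub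
    _ ≤ ∑ u ∈ S1.toFinset, ((G.neighborSet u ∩ S2).toFinset).card := Finset.card_biUnion_le
    _ ≤ ∑ _u ∈ S1.toFinset, (d - 1) := Finset.sum_le_sum hpiece
    _ = (d - 1) * S1.ncard := by
        rw [Finset.sum_const, smul_eq_mul, Set.ncard_eq_toFinset_card' S1, mul_comm]

lemma sphere_ncard_le [Fintype W] {m : W} {d : ℕ}
    (hdeg : ∀ v, (G.neighborSet v).ncard ≤ d) (n : ℕ) :
    (ballSet G m (n+1) \ ballSet G m n).ncard ≤ d * (d - 1) ^ n := by
  induction n with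
  | zero => simpa using sphere_zero_ncard G hdeg
  | succ k ih =>
      calc (ballSet G m (k+2) \ ballSet G m (k+1)).ncard
          ≤ (d - 1) * (ballSet G m (k+1) \ ballSet G m k).ncard :=
            sphere_succ_ncard G k hdeg
        _ ≤ (d - 1) * (d * (d-1)^k) := Nat.mul_le_mul_left _ ih
        _ = d * (d-1)^(k+1) := by ring

lemma ballSet_ncard_le [Fintype W] {m : W} {d : ℕ} (hd : 3 ≤ d)
    (hdeg : ∀ v, (G.neighborSet v).ncard ≤ d) (r : ℕ) :
    (ballSet G m r).ncard ≤ 2 * d * (d - 1) ^ r := by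
  induction r with
  | zero =>
      have h0 : ballSet G m 0 ⊆ {m} := fun v hv => mem_ballSet_zero G hv
      calc (ballSet G m 0).ncard ≤ ({m} : Set W).ncard :=
            Set.ncard_le_ncard h0 (Set.toFinite _)
        _ = 1 := Set.ncard_singleton m
        _ ≤ 2 * d * (d-1)^0 := by simp; omega
  | succ n ih =>
      have hsub : ballSet G m (n+1) ⊆ ballSet G m n ∪ (ballSet G m (n+1) \ ballSet G m n) := by
        intro v hv
        by_cases h : v ∈ ballSet G m n
        · exact Or.inl h
        · exact Or.inr ⟨hv, h⟩
      have hpow : 0 < (d-1)^n := Nat.pow_pos (by omega)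
      calc (ballSet G m (n+1)).ncard
          ≤ (ballSet G m n ∪ (ballSet G m (n+1) \ ballSet G m n)).ncard :=
            Set.ncard_le_ncard hsub (Set.toFinite _)
        _ ≤ (ballSet G m n).ncard + (ballSet G m (n+1) \ ballSet G m n).ncard :=
            Set.ncard_union_le _ _
        _ ≤ 2 * d * (d-1)^n + d * (d-1)^n :=
            Nat.add_le_add ih (sphere_ncard_le G hdeg n)
        _ ≤ 2 * d * (d-1)^(n+1) := by
            have h1 : 2 * d * (d-1)^n + d * (d-1)^n = 3 * d * (d-1)^n := by ring
            rw [h1, pow_succ]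
            have h2 : 3 * d ≤ 2 * d * (d-1) := by
              obtain ⟨e, rfl⟩ : ∃ e, d = e + 3 := ⟨d-3, by omega⟩
              have h3 : e + 3 - 1 = e + 2 := rfl
              rw [h3]; nlinarith
            calc 3 * d * (d-1)^n ≤ 2 * d * (d-1) * (d-1)^n := Nat.mul_le_mul_right _ h2
              _ = 2 * d * ((d-1)^n * (d-1)) := by ring


section Subdiv

variable {V : Type} [LinearOrder V] {Γ : SimpleGraph V} {j : ℕ}

lemma subdiv_adj_inl_inl {a b : V} (h : (subdiv Γ j).Adj (.inl a) (.inl b)) :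
    j = 1 ∧ Γ.Adj a b := by
  rw [subdiv, SimpleGraph.fromRel_adj] at h
  obtain ⟨-, h | h⟩ := h
  · exact h
  · exact ⟨h.1, h.2.symm⟩

lemma subdiv_adj_inl_inr {a x y : V} {i : Fin (j-1)} {hq : x < y ∧ Γ.Adj x y}
    (h : (subdiv Γ j).Adj (.inl a) (.inr ⟨(x, y, i), hq⟩)) :
    (a = x ∧ (i : ℕ) = 0) ∨ (a = y ∧ (i : ℕ) + 2 = j) := by
  rw [subdiv, SimpleGraph.fromRel_adj] at h
  obtain ⟨-, h | h⟩ := h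
  · exact h
  · exact h.elim

lemma subdiv_adj_inr_inr {x y x' y' : V} {i : Fin (j-1)} {i' : Fin (j-1)}
    {hq : x < y ∧ Γ.Adj x y} {hq' : x' < y' ∧ Γ.Adj x' y'}
    (h : (subdiv Γ j).Adj (.inr ⟨(x, y, i), hq⟩) (.inr ⟨(x', y', i'), hq'⟩)) :
    x = x' ∧ y = y' ∧ ((i : ℕ) + 1 = (i' : ℕ) ∨ (i' : ℕ) + 1 = (i : ℕ)) := by
  rw [subdiv, SimpleGraph.fromRel_adj] at h
  obtain ⟨-, h | h⟩ := h
  · exact ⟨h.1, h.2.1, Or.inl h.2.2⟩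
  · exact ⟨h.1.symm, h.2.1.symm, Or.inr (by omega)⟩

lemma subdiv_adj_inr_inl {a x y : V} {i : Fin (j-1)} {hq : x < y ∧ Γ.Adj x y}
    (h : (subdiv Γ j).Adj (.inr ⟨(x, y, i), hq⟩) (.inl a)) :
    (a = x ∧ (i : ℕ) = 0) ∨ (a = y ∧ (i : ℕ) + 2 = j) :=
  subdiv_adj_inl_inr h.symm

lemma inr_eq_helper {x y x' y' : V} {i : Fin (j-1)} {i' : Fin (j-1)}
    {h : x < y ∧ Γ.Adj x y} {h' : x' < y' ∧ Γ.Adj x' y'}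
    (hx : x = x') (hy : y = y') (hi : (i : ℕ) = (i' : ℕ)) :
    (Sum.inr ⟨(x, y, i), h⟩ : V ⊕ SubIdx Γ j) = Sum.inr ⟨(x', y', i'), h'⟩ := by
  subst hx; subst hy
  have : i = i' := Fin.ext hi
  subst this; rfl

lemma subdiv_deg_inl [Fintype V] {d : ℕ} (hreg : ∀ v : V, (Γ.neighborSet v).ncard = d)
    (a : V) : ((subdiv Γ j).neighborSet (.inl a)).ncard ≤ d := by
  classical
  set f : (V ⊕ SubIdx Γ j) → V := fun w =>
    match w with
    | .inl b => b
    | .inr ⟨(x, y, _), _⟩ => if x = a then y else x with hf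
  have hmaps : ∀ w ∈ (subdiv Γ j).neighborSet (.inl a), f w ∈ Γ.neighborSet a := by
    rintro (b | ⟨⟨x, y, i⟩, hlt, hadj⟩) hw
    · exact (subdiv_adj_inl_inl hw).2
    · rcases subdiv_adj_inl_inr hw with ⟨rfl, -⟩ | ⟨rfl, -⟩
      · simpa [f] using hadj
      · have hxa : ¬ x = a := ne_of_lt hlt
        simpa [f, hxa] using hadj.symm
  have hinj : Set.InjOn f ((subdiv Γ j).neighborSet (.inl a)) := by
    rintro (b | ⟨⟨x, y, i⟩, hlt, hadj⟩) hu (b' | ⟨⟨x', y', i'⟩, hlt', hadj'⟩) hv hfe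
    · have : b = b' := hfe
      rw [this]
    · have hj : j = 1 := (subdiv_adj_inl_inl hu).1
      exact absurd i'.isLt (by omega)
    · have hj : j = 1 := (subdiv_adj_inl_inl hv).1
      exact absurd i.isLt (by omega)
    · have hl : x < y := hlt
      have hl' : x' < y' := hlt'
      rcases subdiv_adj_inl_inr hu with ⟨he0, hi0⟩ | ⟨he0, hij⟩ <;>
        rcases subdiv_adj_inl_inr hv with ⟨he, hi0'⟩ | ⟨he, hij'⟩
      · -- a = x, a = x'
        simp only [f, if_pos he0.symm, if_pos he.symm] at hfe
        exact inr_eq_helper (he0 ▸ he ▸ rfl) hfe (by omega)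
      · -- a = x, a = y' : contradiction
        exfalso
        have hxa : ¬ x' = a := by rw [he]; exact ne_of_lt hl'
        simp only [f, if_pos he0.symm, if_neg hxa] at hfe
        -- hfe : y = x', he0 : a = x, he : a = y', so y = x' < y' = a = x < y
        have : y < y := by
          calc y = x' := hfe
            _ < y' := hl'
            _ = a := he.symm
            _ = x := he0
            _ < y := hl
        exact absurd this (lt_irrefl y)
      · -- a = y, a = x' : contradiction
        exfalso
        have hxa : ¬ x = a := by rw [he0]; exact ne_of_lt hl
        simp only [f, if_neg hxa, if_pos he.symm] at hfe
        have : y' < y' := by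
          calc y' = x := hfe.symm
            _ < y := hl
            _ = a := he0.symm
            _ = x' := he
            _ < y' := hl'
        exact absurd this (lt_irrefl y')
      · -- a = y, a = y'
        have hxa : ¬ x = a := by rw [he0]; exact ne_of_lt hl
        have hxa' : ¬ x' = a := by rw [he]; exact ne_of_lt hl'
        simp only [f, if_neg hxa, if_neg hxa'] at hfe
        exact inr_eq_helper hfe (he0 ▸ he ▸ rfl) (by omega)
  calc ((subdiv Γ j).neighborSet (.inl a)).ncard
      ≤ (Γ.neighborSet a).ncard :=
        Set.ncard_le_ncard_of_injOn f hmaps hinj (Set.toFinite _)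
    _ = d := hreg a

lemma subdiv_deg_inr [Fintype V] {x y : V} {i : Fin (j-1)} {hq : x < y ∧ Γ.Adj x y} :
    ((subdiv Γ j).neighborSet (.inr ⟨(x, y, i), hq⟩)).ncard ≤ 2 := by
  classical
  set q : SubIdx Γ j := ⟨(x, y, i), hq⟩ with hqdef
  set g : (V ⊕ SubIdx Γ j) → Fin 2 := fun w =>
    match w with
    | .inl b => if b = x then 0 else 1
    | .inr ⟨(_, _, i'), _⟩ => if (i' : ℕ) < (i : ℕ) then 0 else 1 with hg
  have hxy : x ≠ y := ne_of_lt hq.1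
  have hinj : Set.InjOn g ((subdiv Γ j).neighborSet (.inr q)) := by
    rintro (b | ⟨⟨x1, y1, i1⟩, hlt1, hadj1⟩) hu (b' | ⟨⟨x2, y2, i2⟩, hlt2, hadj2⟩) hv hfe
    · rcases subdiv_adj_inr_inl hu with ⟨rfl, hc⟩ | ⟨rfl, hc⟩ <;>
        rcases subdiv_adj_inr_inl hv with ⟨rfl, hc'⟩ | ⟨rfl, hc'⟩
      · rfl
      · exfalso; simp only [g, if_pos rfl, if_neg hxy.symm] at hfe
        exact absurd hfe (by decide)
      · exfalso; simp only [g, if_pos rfl, if_neg hxy.symm] at hfe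
        exact absurd hfe (by decide)
      · rfl
    · exfalso
      obtain ⟨rfl, rfl, hor⟩ := subdiv_adj_inr_inr hv
      rcases subdiv_adj_inr_inl hu with ⟨rfl, hc⟩ | ⟨rfl, hc⟩
      · -- b = x1, i = 0 : g u = 0, g v must be 1
        simp only [g, if_pos rfl] at hfe
        have h2 : ¬ ((i2 : ℕ) < (i : ℕ)) := by omega
        simp only [if_neg h2] at hfe
        exact absurd hfe (by decide)
      · -- b = y1, i + 2 = j : g u = 1
        simp only [g, if_neg hxy.symm] at hfe
        have hi2 : (i2 : ℕ) < j - 1 := i2.isLt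
        rcases hor with h | h
        · omega
        · have h2 : (i2 : ℕ) < (i : ℕ) := by omega
          simp only [if_pos h2] at hfe
          exact absurd hfe (by decide)
    · exfalso
      obtain ⟨rfl, rfl, hor⟩ := subdiv_adj_inr_inr hu
      rcases subdiv_adj_inr_inl hv with ⟨rfl, hc⟩ | ⟨rfl, hc⟩
      · simp only [g, if_pos rfl] at hfe
        have h2 : ¬ ((i1 : ℕ) < (i : ℕ)) := by omega
        simp only [if_neg h2] at hfe
        exact absurd hfe (by decide)
      · simp only [g, if_neg hxy.symm] at hfe
        have hi1 : (i1 : ℕ) < j - 1 := i1.isLt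
        rcases hor with h | h
        · omega
        · have h2 : (i1 : ℕ) < (i : ℕ) := by omega
          simp only [if_pos h2] at hfe
          exact absurd hfe (by decide)
    · obtain ⟨rfl, rfl, hor1⟩ := subdiv_adj_inr_inr hu
      obtain ⟨he1, he2, hor2⟩ := subdiv_adj_inr_inr hv
      refine inr_eq_helper he1 he2 ?_
      simp only [g] at hfe
      rcases hor1 with h1 | h1 <;> rcases hor2 with h2 | h2
      · omega
      · -- i1 = i+1, i2 = i-1 : g u = 1, g v = 0
        exfalso
        have hh1 : ¬ ((i1 : ℕ) < (i : ℕ)) := by omega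
        have hh2 : (i2 : ℕ) < (i : ℕ) := by omega
        simp only [if_neg hh1, if_pos hh2] at hfe
        exact absurd hfe (by decide)
      · exfalso
        have hh1 : (i1 : ℕ) < (i : ℕ) := by omega
        have hh2 : ¬ ((i2 : ℕ) < (i : ℕ)) := by omega
        simp only [if_pos hh1, if_neg hh2] at hfe
        exact absurd hfe (by decide)
      · omega
  calc ((subdiv Γ j).neighborSet (.inr q)).ncard
      ≤ (Set.univ : Set (Fin 2)).ncard :=
        Set.ncard_le_ncard_of_injOn g (fun w _ => Set.mem_univ _) hinj (Set.toFinite _)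
    _ = 2 := by rw [Set.ncard_univ]; simp

lemma subdiv_deg [Fintype V] {d : ℕ} (hd : 3 ≤ d)
    (hreg : ∀ v : V, (Γ.neighborSet v).ncard = d) :
    ∀ w : V ⊕ SubIdx Γ j, ((subdiv Γ j).neighborSet w).ncard ≤ d := by
  rintro (a | ⟨⟨x, y, i⟩, hq⟩)
  · exact subdiv_deg_inl hreg a
  · exact le_trans subdiv_deg_inr (by omega)

/-- The distance certificate: a vertex `z` of the subdivision at distance `≤ n` from the
base point carries a walk in `Γ` from `a` to a nearby original vertex. -/
def Good (Γ : SimpleGraph V) (j : ℕ) (a : V) : (V ⊕ SubIdx Γ j) → ℕ → Prop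
  | .inl b, n => ∃ p : Γ.Walk a b, j * p.length ≤ n + j
  | .inr ⟨(x, y, i), _⟩, n =>
      (∃ p : Γ.Walk a x, j * p.length + (i : ℕ) + 1 ≤ n + j) ∨
      (∃ p : Γ.Walk a y, j * p.length + (j - 1 - (i : ℕ)) ≤ n + j)

lemma good_mono {a : V} {z : V ⊕ SubIdx Γ j} {n n' : ℕ} (h : n ≤ n')
    (hg : Good Γ j a z n) : Good Γ j a z n' := by
  rcases z with b | ⟨⟨x, y, i⟩, hq⟩
  · obtain ⟨p, hp⟩ := hg
    exact ⟨p, by omega⟩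
  · rcases hg with ⟨p, hp⟩ | ⟨p, hp⟩
    · exact Or.inl ⟨p, by omega⟩
    · exact Or.inr ⟨p, by omega⟩

lemma good_step {a : V} {z z' : V ⊕ SubIdx Γ j} {n : ℕ} (hg : Good Γ j a z n)
    (hadj : (subdiv Γ j).Adj z z') : Good Γ j a z' (n + 1) := by
  rcases z with b | ⟨⟨x, y, i⟩, hlt, hxy⟩ <;> rcases z' with b' | ⟨⟨x', y', i'⟩, hlt', hxy'⟩
  · -- inl b → inl b' : j = 1
    obtain ⟨hj, hab⟩ := subdiv_adj_inl_inl hadj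
    obtain ⟨p, hp⟩ := hg
    exact ⟨p.concat hab, by rw [SimpleGraph.Walk.length_concat, Nat.mul_add, Nat.mul_one]; omega⟩
  · -- inl b → inr (x', y', i')
    obtain ⟨p, hp⟩ := hg
    rcases subdiv_adj_inl_inr hadj with ⟨rfl, hi0⟩ | ⟨rfl, hij⟩
    · exact Or.inl ⟨p, by omega⟩
    · exact Or.inr ⟨p, by omega⟩
  · -- inr (x, y, i) → inl b'
    have hiv : (i : ℕ) < j - 1 := i.isLt
    rcases subdiv_adj_inr_inl hadj with ⟨rfl, hi0⟩ | ⟨rfl, hij⟩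
    · rcases hg with ⟨p, hp⟩ | ⟨p, hp⟩
      · exact ⟨p, by omega⟩
      · exact ⟨p.concat hxy.symm, by rw [SimpleGraph.Walk.length_concat, Nat.mul_add, Nat.mul_one]; omega⟩
    · rcases hg with ⟨p, hp⟩ | ⟨p, hp⟩
      · exact ⟨p.concat hxy, by rw [SimpleGraph.Walk.length_concat, Nat.mul_add, Nat.mul_one]; omega⟩
      · exact ⟨p, by omega⟩
  · -- inr (x, y, i) → inr (x', y', i')
    have hiv : (i : ℕ) < j - 1 := i.isLt
    have hiv' : (i' : ℕ) < j - 1 := i'.isLt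
    obtain ⟨rfl, rfl, hor⟩ := subdiv_adj_inr_inr hadj
    rcases hg with ⟨p, hp⟩ | ⟨p, hp⟩
    · exact Or.inl ⟨p, by omega⟩
    · exact Or.inr ⟨p, by omega⟩

lemma good_base (m : V ⊕ SubIdx Γ j) :
    Good Γ j (Sum.elim id (fun q => q.1.1) m) m 0 := by
  rcases m with a | ⟨⟨x, y, i⟩, hq⟩
  · exact ⟨SimpleGraph.Walk.nil, by simp⟩
  · have hiv : (i : ℕ) < j - 1 := i.isLt
    exact Or.inl ⟨SimpleGraph.Walk.nil, by change j * 0 + (i : ℕ) + 1 ≤ 0 + j; omega⟩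

lemma good_of_walk {m : V ⊕ SubIdx Γ j} (n : ℕ) (z : V ⊕ SubIdx Γ j)
    (w : (subdiv Γ j).Walk m z) (hw : w.length ≤ n) :
    Good Γ j (Sum.elim id (fun q => q.1.1) m) z n := by
  induction n generalizing z w with
  | zero =>
      have hz : z = m := (SimpleGraph.Walk.eq_of_length_eq_zero (Nat.le_zero.mp hw)).symm
      subst hz
      exact good_base z
  | succ k ih =>
      by_cases hlen : w.length ≤ k
      · exact good_mono (Nat.le_succ k) (ih z w hlen)
      · have hlen' : w.length = k + 1 := by omega
        have hnn : ¬ w.reverse.Nil := by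
          rw [SimpleGraph.Walk.not_nil_iff_lt_length, SimpleGraph.Walk.length_reverse]; omega
        obtain ⟨u, ha, q, hq⟩ := SimpleGraph.Walk.not_nil_iff.mp hnn
        have hql : q.length = k := by
          have : w.reverse.length = k + 1 := by
            rw [SimpleGraph.Walk.length_reverse]; exact hlen'
          rw [hq] at this
          simp only [SimpleGraph.Walk.length_cons] at this
          omega
        have hgu := ih u q.reverse (by rw [SimpleGraph.Walk.length_reverse]; omega)
        exact good_step hgu ha.symm

/-- Interior subdivision vertices on edges incident to `b`. -/
def edgeFan (Γ : SimpleGraph V) [LinearOrder V] (j : ℕ) (b : V) : Set (V ⊕ SubIdx Γ j) :=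
  {z | ∃ q : SubIdx Γ j, z = Sum.inr q ∧ (q.1.1 = b ∨ q.1.2.1 = b)}

lemma edgeFan_ncard [Fintype V] {d : ℕ} (hreg : ∀ v : V, (Γ.neighborSet v).ncard = d)
    (b : V) : (edgeFan Γ j b).ncard ≤ d * (j - 1) := by
  classical
  set f : (V ⊕ SubIdx Γ j) → V × ℕ := fun z =>
    match z with
    | .inl _ => (b, 0)
    | .inr ⟨(x, y, i), _⟩ => (if x = b then y else x, (i : ℕ)) with hfdef
  set t : Finset (V × ℕ) := (Γ.neighborSet b).toFinset ×ˢ Finset.range (j - 1) with htdef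
  have hmaps : ∀ z ∈ edgeFan Γ j b, f z ∈ (↑t : Set (V × ℕ)) := by
    rintro z ⟨⟨⟨x, y, i⟩, hlt, hadj⟩, rfl, hxy⟩
    have hfz : f (Sum.inr ⟨(x, y, i), ⟨hlt, hadj⟩⟩) = (if x = b then y else x, (i : ℕ)) := rfl
    rw [hfz]
    simp only [t, Finset.coe_product, Set.mem_prod, Finset.mem_coe, Set.mem_toFinset,
      Finset.mem_range]
    rcases hxy with h | h
    · refine ⟨?_, i.isLt⟩
      rw [if_pos h]
      exact h ▸ hadj
    · have hxb : ¬ x = b := by rw [← h]; exact ne_of_lt hlt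
      refine ⟨?_, i.isLt⟩
      rw [if_neg hxb]
      exact h ▸ hadj.symm
  have hinj : Set.InjOn f (edgeFan Γ j b) := by
    rintro z1 ⟨⟨⟨x1, y1, i1⟩, hlt1, hadj1⟩, rfl, hxy1⟩ z2 ⟨⟨⟨x2, y2, i2⟩, hlt2, hadj2⟩, rfl, hxy2⟩ hfe
    have hfe' : (if x1 = b then y1 else x1, (i1 : ℕ)) = (if x2 = b then y2 else x2, (i2 : ℕ)) :=
      hfe
    obtain ⟨hfe1, hfe2⟩ := Prod.mk.injEq _ _ _ _ ▸ hfe'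
    rcases hxy1 with h1 | h1 <;> rcases hxy2 with h2 | h2
    · rw [if_pos h1, if_pos h2] at hfe1
      exact inr_eq_helper (h1.trans h2.symm) hfe1 hfe2
    · exfalso
      have hxb2 : ¬ x2 = b := by rw [← h2]; exact ne_of_lt hlt2
      rw [if_pos h1, if_neg hxb2] at hfe1
      have : y1 < y1 :=
        calc y1 = x2 := hfe1
          _ < y2 := hlt2
          _ = b := h2
          _ = x1 := h1.symm
          _ < y1 := hlt1
      exact absurd this (lt_irrefl _)
    · exfalso
      have hxb1 : ¬ x1 = b := by rw [← h1]; exact ne_of_lt hlt1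
      rw [if_neg hxb1, if_pos h2] at hfe1
      have : y2 < y2 :=
        calc y2 = x1 := hfe1.symm
          _ < y1 := hlt1
          _ = b := h1
          _ = x2 := h2.symm
          _ < y2 := hlt2
      exact absurd this (lt_irrefl _)
    · have hxb1 : ¬ x1 = b := by rw [← h1]; exact ne_of_lt hlt1
      have hxb2 : ¬ x2 = b := by rw [← h2]; exact ne_of_lt hlt2
      rw [if_neg hxb1, if_neg hxb2] at hfe1
      exact inr_eq_helper hfe1 (h1.trans h2.symm) hfe2
  calc (edgeFan Γ j b).ncard ≤ (↑t : Set (V × ℕ)).ncard :=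
        Set.ncard_le_ncard_of_injOn f hmaps hinj (Set.toFinite _)
    _ = t.card := Set.ncard_coe_finset t
    _ = d * (j - 1) := by
        rw [htdef, Finset.card_product, ← Set.ncard_eq_toFinset_card', hreg b,
          Finset.card_range]


end Subdiv

/-- For a `d`-regular graph (`d ≥ 3`) of girth `g` and `j ≥ 1`,
`0 < λ ≤ 1/4`, the ball of radius `λ·j·g` around any vertex `m` of the `j`-subdivision
has at most `C·j·(d-1)^{g/4}` vertices, with `C` depending only on `d`. -/
theorem stmt_10 (d : ℕ) (hd : 3 ≤ d) :
    ∃ C : ℝ, 0 < C ∧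
      ∀ (V : Type) [Fintype V] [LinearOrder V] (Γ : SimpleGraph V) (g j : ℕ),
        1 ≤ j → 0 < g → Γ.girth = g → (∀ v : V, (Γ.neighborSet v).ncard = d) →
        ∀ (m : V ⊕ SubIdx Γ j) (lam : ℝ), 0 < lam → lam ≤ 1 / 4 →
          (({x | ∃ p : (subdiv Γ j).Walk m x, (p.length : ℝ) ≤ lam * (j * g)}).ncard : ℝ)
            ≤ C * j * ((d : ℝ) - 1) ^ ((g : ℝ) / 4) := by
  classical
  refine ⟨2 * (d : ℝ)^2 * ((d : ℝ) - 1)^2, ?_, ?_⟩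
  · have h3 : (3 : ℝ) ≤ (d : ℝ) := by exact_mod_cast hd
    nlinarith
  intro V _ _ Γ g j hj hgpos hgirth hreg m lam hlam0 hlam1
  classical
  haveI : Fintype (SubIdx Γ j) := by unfold SubIdx; infer_instance
  set a : V := Sum.elim id (fun q => q.1.1) m with hadef
  set L : ℕ := (j * g) / 4 with hLdef
  set r : ℕ := g / 4 + 2 with hrdef
  -- Step 1: the real-radius ball is contained in the `L`-ball
  have hball : {x | ∃ p : (subdiv Γ j).Walk m x, (p.length : ℝ) ≤ lam * (j * g)} ⊆
      ballSet (subdiv Γ j) m L := by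
    rintro z ⟨p, hp⟩
    have hjg : (0 : ℝ) ≤ (j : ℝ) * (g : ℝ) := by positivity
    have h1 : (p.length : ℝ) ≤ (j : ℝ) * (g : ℝ) / 4 := by nlinarith
    have h2 : 4 * p.length ≤ j * g := by
      have h2' : (4 * p.length : ℝ) ≤ ((j * g : ℕ) : ℝ) := by push_cast; linarith
      exact_mod_cast h2'
    exact ⟨p, by omega⟩
  -- Step 2: every element of the `L`-ball is `Good`
  have hgood : ∀ z ∈ ballSet (subdiv Γ j) m L, Good Γ j a z L := by
    rintro z ⟨w, hw⟩
    exact good_of_walk L z w hw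
  have hLr : L + j ≤ j * r := by
    have hgle : g ≤ 4 * (g / 4 + 1) := by omega
    have hmul : j * g ≤ j * (4 * (g / 4 + 1)) := Nat.mul_le_mul_left j hgle
    have h4 : (j * g) / 4 ≤ j * (g / 4 + 1) := by
      calc (j * g) / 4 ≤ (j * (4 * (g / 4 + 1))) / 4 := Nat.div_le_div_right hmul
        _ = j * (g / 4 + 1) := by
            rw [show j * (4 * (g / 4 + 1)) = 4 * (j * (g / 4 + 1)) by ring]
            exact Nat.mul_div_cancel_left _ (by norm_num)
    have : j * r = j * (g / 4 + 1) + j := by rw [hrdef]; ring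
    omega
  have hlen_r : ∀ len : ℕ, j * len ≤ L + j → len ≤ r := by
    intro len h
    exact Nat.le_of_mul_le_mul_left (le_trans h hLr) (by omega)
  set Br : Set V := ballSet Γ a r with hBrdef
  -- Step 3: decomposition of the ball
  have hdecomp : ∀ z ∈ ballSet (subdiv Γ j) m L,
      (∃ b ∈ Br, z = Sum.inl b) ∨ (∃ b ∈ Br, z ∈ edgeFan Γ j b) := by
    intro z hz
    have hg := hgood z hz
    rcases z with b | ⟨⟨x, y, i⟩, hq⟩
    · obtain ⟨p, hp⟩ := hg
      exact Or.inl ⟨b, ⟨p, hlen_r _ (by omega)⟩, rfl⟩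
    · rcases hg with ⟨p, hp⟩ | ⟨p, hp⟩
      · exact Or.inr ⟨x, ⟨p, hlen_r _ (by omega)⟩,
          ⟨⟨(x, y, i), hq⟩, rfl, Or.inl rfl⟩⟩
      · exact Or.inr ⟨y, ⟨p, hlen_r _ (by omega)⟩,
          ⟨⟨(x, y, i), hq⟩, rfl, Or.inr rfl⟩⟩
  -- Step 4: counting
  have hsubF : (ballSet (subdiv Γ j) m L).toFinset ⊆
      Br.toFinset.image Sum.inl ∪ Br.toFinset.biUnion (fun b => (edgeFan Γ j b).toFinset) := by
    intro z hz
    rw [Set.mem_toFinset] at hz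
    rcases hdecomp z hz with ⟨b, hb, rfl⟩ | ⟨b, hb, hzb⟩
    · exact Finset.mem_union_left _ (Finset.mem_image_of_mem _ (Set.mem_toFinset.mpr hb))
    · exact Finset.mem_union_right _ (Finset.mem_biUnion.mpr
        ⟨b, Set.mem_toFinset.mpr hb, Set.mem_toFinset.mpr hzb⟩)
  have hcount : (ballSet (subdiv Γ j) m L).ncard ≤ Br.ncard * (1 + d * (j - 1)) := by
    calc (ballSet (subdiv Γ j) m L).ncard
        = (ballSet (subdiv Γ j) m L).toFinset.card := Set.ncard_eq_toFinset_card' _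
      _ ≤ (Br.toFinset.image Sum.inl ∪
            Br.toFinset.biUnion (fun b => (edgeFan Γ j b).toFinset)).card :=
          Finset.card_le_card hsubF
      _ ≤ (Br.toFinset.image Sum.inl).card +
            (Br.toFinset.biUnion (fun b => (edgeFan Γ j b).toFinset)).card :=
          Finset.card_union_le _ _
      _ ≤ Br.toFinset.card + ∑ b ∈ Br.toFinset, ((edgeFan Γ j b).toFinset).card :=
          Nat.add_le_add Finset.card_image_le Finset.card_biUnion_le
      _ ≤ Br.toFinset.card + ∑ _b ∈ Br.toFinset, d * (j - 1) := by
          refine Nat.add_le_add_left (Finset.sum_le_sum ?_) _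
          intro b _
          rw [← Set.ncard_eq_toFinset_card']
          exact edgeFan_ncard hreg b
      _ = Br.ncard * (1 + d * (j - 1)) := by
          rw [Finset.sum_const, smul_eq_mul, ← Set.ncard_eq_toFinset_card' Br]
          ring
  have hBr : Br.ncard ≤ 2 * d * (d - 1) ^ r :=
    ballSet_ncard_le Γ hd (fun v => le_of_eq (hreg v)) r
  have hfinal : (ballSet (subdiv Γ j) m L).ncard ≤ 2 * d * (d - 1) ^ r * (d * j) := by
    have h1 : 1 + d * (j - 1) ≤ d * j := by
      have : d * j = d * (j - 1) + d := by
        rw [← Nat.mul_succ]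
        congr 1
        omega
      omega
    calc (ballSet (subdiv Γ j) m L).ncard ≤ Br.ncard * (1 + d * (j - 1)) := hcount
      _ ≤ (2 * d * (d - 1) ^ r) * (d * j) := Nat.mul_le_mul hBr h1
  have hN : ({x | ∃ p : (subdiv Γ j).Walk m x, (p.length : ℝ) ≤ lam * (j * g)}).ncard ≤
      2 * d * (d - 1) ^ r * (d * j) :=
    le_trans (Set.ncard_le_ncard hball (Set.toFinite _)) hfinal
  -- Step 5: pass to the reals
  have hd1 : (1 : ℝ) ≤ (d : ℝ) - 1 := by
    have : (3 : ℝ) ≤ (d : ℝ) := by exact_mod_cast hd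
    linarith
  have hcast : ((d - 1 : ℕ) : ℝ) = (d : ℝ) - 1 := by
    have h1 : 1 ≤ d := by omega
    rw [Nat.cast_sub h1, Nat.cast_one]
  have hexp : (((g / 4 : ℕ) : ℝ)) ≤ (g : ℝ) / 4 := by
    have h44 : (g / 4) * 4 ≤ g := Nat.div_mul_le_self g 4
    have hc : (((g / 4) * 4 : ℕ) : ℝ) ≤ (g : ℝ) := Nat.cast_le.mpr h44
    push_cast at hc
    linarith
  have hY : ((d : ℝ) - 1) ^ (g / 4 : ℕ) ≤ ((d : ℝ) - 1) ^ ((g : ℝ) / 4) := by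
    rw [← Real.rpow_natCast ((d : ℝ) - 1) (g / 4)]
    exact Real.rpow_le_rpow_of_exponent_le hd1 hexp
  calc (({x | ∃ p : (subdiv Γ j).Walk m x, (p.length : ℝ) ≤ lam * (j * g)}).ncard : ℝ)
      ≤ ((2 * d * (d - 1) ^ r * (d * j) : ℕ) : ℝ) := Nat.cast_le.mpr hN
    _ = (2 * (d : ℝ)^2 * ((d : ℝ) - 1)^2 * (j : ℝ)) * ((d : ℝ) - 1) ^ (g / 4 : ℕ) := by
        push_cast [hcast]
        rw [hrdef]
        rw [pow_add]
        ring
    _ ≤ (2 * (d : ℝ)^2 * ((d : ℝ) - 1)^2 * (j : ℝ)) * ((d : ℝ) - 1) ^ ((g : ℝ) / 4) := by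
        refine mul_le_mul_of_nonneg_left hY ?_
        have : (3 : ℝ) ≤ (d : ℝ) := by exact_mod_cast hd
        positivity
    _ = 2 * (d : ℝ)^2 * ((d : ℝ) - 1)^2 * (j : ℝ) * ((d : ℝ) - 1) ^ ((g : ℝ) / 4) := by
        ring
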